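/- Let P and Q be probability measures on R^d with finite second moments and let m ∈ (0,1). Then sup_{x ∈ R^d} |δ_{P,m}(x) − δ_{Q,m}(x)| ≤ W_2(P,Q)/√m, where W_2 is the Wasserstein distance of order 2. -/

import Mathlib

open MeasureTheory Set
open scoped ENNReal NNReal

noncomputable def sqDistCdf {d : ℕ} (P : Measure (EuclideanSpace ℝ (Fin d)))
    (x : EuclideanSpace ℝ (Fin d)) (t : ℝ) : ℝ :=
  (P {y | ‖y - x‖ ^ 2 ≤ t}).toReal

noncomputable def quantile (F : ℝ → ℝ) (u : ℝ) : ℝ :=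
  sInf {t : ℝ | u ≤ F t}

set_option linter.unusedSectionVars false
set_option linter.unusedVariables false
set_option linter.deprecated false
set_option maxHeartbeats 1000000

section Aux

variable {d : ℕ} (P : Measure (EuclideanSpace ℝ (Fin d))) [IsProbabilityMeasure P]
  (x : EuclideanSpace ℝ (Fin d))

/-- The cdf of the distance to `x`. -/
noncomputable def distCdf (s : ℝ) : ℝ := (P {y | ‖y - x‖ ≤ s}).toReal

lemma distCdf_nonneg (s : ℝ) : 0 ≤ distCdf P x s := ENNReal.toReal_nonneg

lemma distCdf_le_one (s : ℝ) : distCdf P x s ≤ 1 := by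
  have h := measure_mono (μ := P) (subset_univ {y | ‖y - x‖ ≤ s})
  rw [measure_univ] at h
  simpa [distCdf] using ENNReal.toReal_mono (by simp) h

lemma distCdf_mono : Monotone (distCdf P x) := fun s t hst =>
  ENNReal.toReal_mono (measure_ne_top P _)
    (measure_mono fun y hy => le_trans hy hst)

lemma sqDistCdf_nonneg (t : ℝ) : 0 ≤ sqDistCdf P x t := ENNReal.toReal_nonneg

lemma sqDistCdf_mono : Monotone (sqDistCdf P x) := fun s t hst =>
  ENNReal.toReal_mono (measure_ne_top P _)
    (measure_mono fun y hy => le_trans hy hst)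

lemma sqDistCdf_of_neg {t : ℝ} (ht : t < 0) : sqDistCdf P x t = 0 := by
  have : {y : EuclideanSpace ℝ (Fin d) | ‖y - x‖ ^ 2 ≤ t} = ∅ := by
    ext y; simp only [mem_setOf_eq, mem_empty_iff_false, iff_false, not_le]
    exact lt_of_lt_of_le ht (sq_nonneg _)
  simp [sqDistCdf, this]

lemma sqDistCdf_sq {s : ℝ} (hs : 0 ≤ s) : sqDistCdf P x (s ^ 2) = distCdf P x s := by
  have : {y : EuclideanSpace ℝ (Fin d) | ‖y - x‖ ^ 2 ≤ s ^ 2}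
      = {y | ‖y - x‖ ≤ s} := by
    ext y; simp only [mem_setOf_eq]
    constructor
    · intro h; nlinarith [norm_nonneg (y - x)]
    · intro h; nlinarith [norm_nonneg (y - x)]
  rw [sqDistCdf, this]; rfl

lemma exists_quantile_witness {u : ℝ} (hu : u < 1) :
    ∃ t : ℝ, u ≤ sqDistCdf P x t := by
  rcases lt_or_ge u 0 with h | h
  · exact ⟨0, h.le.trans (sqDistCdf_nonneg P x 0)⟩
  · have hmono : Monotone fun n : ℕ => {y : EuclideanSpace ℝ (Fin d) | ‖y - x‖ ^ 2 ≤ (n : ℝ)} := by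
      intro a b hab y hy
      simp only [mem_setOf_eq] at hy ⊢
      exact hy.trans (by exact_mod_cast hab)
    have hU : ⋃ n : ℕ, {y : EuclideanSpace ℝ (Fin d) | ‖y - x‖ ^ 2 ≤ (n : ℝ)} = univ := by
      ext y
      simp only [mem_iUnion, mem_setOf_eq, mem_univ, iff_true]
      exact exists_nat_ge _
    have h1 : ENNReal.ofReal u < ⨆ n : ℕ, P {y | ‖y - x‖ ^ 2 ≤ (n : ℝ)} := by
      rw [← Directed.measure_iUnion hmono.directed_le, hU, measure_univ]
      exact ENNReal.ofReal_lt_one.mpr hu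
    obtain ⟨n, hn⟩ := lt_iSup_iff.mp h1
    refine ⟨n, ?_⟩
    have := ENNReal.toReal_mono (measure_ne_top P _) hn.le
    rwa [ENNReal.toReal_ofReal h] at this

lemma quantile_set_bddBelow {u : ℝ} (hu : 0 < u) :
    BddBelow {t : ℝ | u ≤ sqDistCdf P x t} := by
  refine ⟨0, fun t ht => ?_⟩
  by_contra h
  push_neg at h
  rw [mem_setOf_eq, sqDistCdf_of_neg P x h] at ht
  linarith

lemma le_sqDistCdf_quantile {u : ℝ} (hu : u ∈ Ioo (0 : ℝ) 1) :
    u ≤ sqDistCdf P x (quantile (sqDistCdf P x) u) := by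
  set S := {t : ℝ | u ≤ sqDistCdf P x t} with hS
  have hne : S.Nonempty := exists_quantile_witness P x hu.2
  have hbdd : BddBelow S := quantile_set_bddBelow P x hu.1
  set c := sInf S with hc
  have hstep : ∀ ε : ℝ, 0 < ε → u ≤ sqDistCdf P x (c + ε) := by
    intro ε hε
    obtain ⟨t, htS, htlt⟩ := (csInf_lt_iff hbdd hne).mp (lt_add_of_pos_right c hε)
    exact le_trans htS (sqDistCdf_mono P x htlt.le)
  set A : ℕ → Set (EuclideanSpace ℝ (Fin d)) :=
    fun n => {y | ‖y - x‖ ^ 2 ≤ c + 1 / (n + 1)} with hA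
  have hInter : ⋂ n, A n = {y | ‖y - x‖ ^ 2 ≤ c} := by
    ext y
    simp only [hA, mem_iInter, mem_setOf_eq]
    constructor
    · intro h
      by_contra hlt
      push_neg at hlt
      obtain ⟨n, hn⟩ := exists_nat_one_div_lt (sub_pos.mpr hlt)
      have := h n
      linarith
    · intro h n
      have : (0:ℝ) < 1 / (n + 1) := by positivity
      linarith
  have hmeas : ∀ n, MeasurableSet (A n) := by
    intro n
    exact (measurableSet_le (by fun_prop) measurable_const)
  have hanti : Directed (· ⊇ ·) A := by
    refine (antitone_nat_of_succ_le ?_).directed_ge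
    intro n y hy
    simp only [hA, mem_setOf_eq] at hy ⊢
    have h1 : (0:ℝ) < (n:ℝ) + 1 := by positivity
    have h2 : (0:ℝ) < (n:ℝ) + 1 + 1 := by positivity
    have : (1:ℝ) / ((n:ℝ) + 1 + 1) ≤ 1 / ((n:ℝ) + 1) := by
      rw [div_le_div_iff₀ h2 h1]; nlinarith
    push_cast at hy
    linarith
  have hib : ENNReal.ofReal u ≤ P (⋂ n, A n) := by
    rw [Directed.measure_iInter (fun n => (hmeas n).nullMeasurableSet) hanti
      ⟨0, measure_ne_top P _⟩]
    refine le_iInf fun n => ENNReal.ofReal_le_of_le_toReal ?_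
    exact hstep _ (by positivity)
  rw [hInter] at hib
  have := ENNReal.toReal_mono (measure_ne_top P _) hib
  rwa [ENNReal.toReal_ofReal hu.1.le] at this

lemma quantile_le_iff {u t : ℝ} (hu : u ∈ Ioo (0 : ℝ) 1) :
    quantile (sqDistCdf P x) u ≤ t ↔ u ≤ sqDistCdf P x t := by
  constructor
  · intro h
    exact le_trans (le_sqDistCdf_quantile P x hu) (sqDistCdf_mono P x h)
  · intro h
    exact csInf_le (quantile_set_bddBelow P x hu.1) h

lemma quantile_nonneg {u : ℝ} (hu : u ∈ Ioo (0 : ℝ) 1) :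
    0 ≤ quantile (sqDistCdf P x) u := by
  refine le_csInf (exists_quantile_witness P x hu.2) fun t ht => ?_
  by_contra h
  push_neg at h
  rw [mem_setOf_eq, sqDistCdf_of_neg P x h] at ht
  linarith [hu.1]

lemma quantile_monotoneOn :
    MonotoneOn (quantile (sqDistCdf P x)) (Ioo (0 : ℝ) 1) := by
  intro u hu v hv huv
  exact csInf_le_csInf (quantile_set_bddBelow P x hu.1)
    (exists_quantile_witness P x hv.2) (fun t ht => le_trans huv ht)

/-- Square root of the quantile of the squared-distance cdf : the quantile of
the distance distribution. -/
noncomputable def qd (u : ℝ) : ℝ := Real.sqrt (quantile (sqDistCdf P x) u)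

lemma qd_nonneg (u : ℝ) : 0 ≤ qd P x u := Real.sqrt_nonneg _

lemma qd_le_iff {u s : ℝ} (hu : u ∈ Ioo (0 : ℝ) 1) (hs : 0 ≤ s) :
    qd P x u ≤ s ↔ u ≤ distCdf P x s := by
  rw [← sqDistCdf_sq P x hs]
  constructor
  · intro h
    refine (quantile_le_iff P x hu).mp ?_
    calc quantile (sqDistCdf P x) u
        = Real.sqrt (quantile (sqDistCdf P x) u) ^ 2 :=
          (Real.sq_sqrt (quantile_nonneg P x hu)).symm
      _ ≤ s ^ 2 := by
          apply pow_le_pow_left₀ (Real.sqrt_nonneg _) h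
  · intro h
    have h2 := (quantile_le_iff P x hu).mpr h
    calc qd P x u ≤ Real.sqrt (s ^ 2) := Real.sqrt_le_sqrt h2
      _ = s := Real.sqrt_sq hs

lemma qd_monotoneOn : MonotoneOn (qd P x) (Ioo (0 : ℝ) 1) := fun u hu v hv huv =>
  Real.sqrt_le_sqrt (quantile_monotoneOn P x hu hv huv)

lemma qd_aemeasurable :
    AEMeasurable (qd P x) (volume.restrict (Ioo (0 : ℝ) 1)) :=
  aemeasurable_restrict_of_monotoneOn measurableSet_Ioo (qd_monotoneOn P x)

end Aux


/-- Double layer-cake formula for the product of two nonnegative functions. -/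
lemma layer2 {α : Type*} [MeasurableSpace α] (μ : Measure α) {F G : α → ℝ}
    (hF : AEMeasurable F μ) (hG : AEMeasurable G μ)
    (hF0 : 0 ≤ᵐ[μ] F) (hG0 : 0 ≤ᵐ[μ] G) :
    ∫⁻ a, ENNReal.ofReal (F a) * ENNReal.ofReal (G a) ∂μ
      = ∫⁻ s in Ioi (0:ℝ), ∫⁻ t in Ioi (0:ℝ), μ ({a | s < F a} ∩ {a | t < G a}) := by
  obtain ⟨F', hF'm, hFF'⟩ := hF
  obtain ⟨G', hG'm, hGG'⟩ := hG
  have hF0' : 0 ≤ᵐ[μ] F' := by filter_upwards [hF0, hFF'] with a h1 h2; rwa [h2] at h1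
  have hG0' : 0 ≤ᵐ[μ] G' := by filter_upwards [hG0, hGG'] with a h1 h2; rwa [h2] at h1
  have hL : ∫⁻ a, ENNReal.ofReal (F a) * ENNReal.ofReal (G a) ∂μ
      = ∫⁻ a, ENNReal.ofReal (F' a) * ENNReal.ofReal (G' a) ∂μ := by
    apply lintegral_congr_ae
    filter_upwards [hFF', hGG'] with a h1 h2
    rw [h1, h2]
  have hR : ∀ s t : ℝ, μ ({a | s < F a} ∩ {a | t < G a})
      = μ ({a | s < F' a} ∩ {a | t < G' a}) := by
    intro s t
    apply measure_congr
    rw [Filter.eventuallyEq_set]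
    filter_upwards [hFF', hGG'] with a h1 h2
    simp [h1, h2]
  rw [hL]
  simp_rw [hR]
  -- now the measurable case
  set ν : Measure α := μ.withDensity fun a => ENNReal.ofReal (G' a) with hν
  have hstep1 : ∫⁻ a, ENNReal.ofReal (F' a) * ENNReal.ofReal (G' a) ∂μ
      = ∫⁻ a, ENNReal.ofReal (F' a) ∂ν := by
    rw [hν, lintegral_withDensity_eq_lintegral_mul μ
      hG'm.ennreal_ofReal hF'm.ennreal_ofReal]
    exact lintegral_congr fun a => (mul_comm _ _)
  have hstep2 : ∫⁻ a, ENNReal.ofReal (F' a) ∂ν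
      = ∫⁻ s in Ioi (0:ℝ), ν {a | s < F' a} := by
    refine lintegral_eq_lintegral_meas_lt ν ?_ hF'm.aemeasurable
    exact (withDensity_absolutelyContinuous μ _).ae_le hF0'
  have hstep3 : ∀ s : ℝ, ν {a | s < F' a}
      = ∫⁻ t in Ioi (0:ℝ), μ ({a | s < F' a} ∩ {a | t < G' a}) := by
    intro s
    rw [hν, withDensity_apply _ (measurableSet_lt measurable_const hF'm)]
    rw [lintegral_eq_lintegral_meas_lt (μ.restrict _) (ae_restrict_of_ae hG0')
      hG'm.aemeasurable]
    refine lintegral_congr fun t => ?_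
    rw [Measure.restrict_apply (measurableSet_lt measurable_const hG'm), inter_comm]
  rw [hstep1, hstep2]
  exact lintegral_congr fun s => hstep3 s

/-- Expansion `∫(F-G)² + 2∫FG = ∫F² + ∫G²` at the level of `lintegral`s. -/
lemma sq_expand {α : Type*} [MeasurableSpace α] (μ : Measure α) {F G : α → ℝ}
    (hF : AEMeasurable F μ) (hG : AEMeasurable G μ)
    (hF0 : ∀ a, 0 ≤ F a) (hG0 : ∀ a, 0 ≤ G a) :
    (∫⁻ a, ENNReal.ofReal ((F a - G a) ^ 2) ∂μ)
      + 2 * ∫⁻ a, ENNReal.ofReal (F a) * ENNReal.ofReal (G a) ∂μ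
    = (∫⁻ a, ENNReal.ofReal (F a) * ENNReal.ofReal (F a) ∂μ)
      + ∫⁻ a, ENNReal.ofReal (G a) * ENNReal.ofReal (G a) ∂μ := by
  rw [← lintegral_const_mul' 2 _ (by norm_num)]
  rw [← lintegral_add_left' (show AEMeasurable (fun a => ENNReal.ofReal ((F a - G a) ^ 2)) μ from
    ((hF.sub hG).pow_const 2).ennreal_ofReal)]
  rw [← lintegral_add_left' (show AEMeasurable (fun a => ENNReal.ofReal (F a) * ENNReal.ofReal (F a)) μ from
    hF.ennreal_ofReal.mul hF.ennreal_ofReal)]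
  refine lintegral_congr fun a => ?_
  have ha := hF0 a
  have hb := hG0 a
  rw [← ENNReal.ofReal_mul ha, ← ENNReal.ofReal_mul ha, ← ENNReal.ofReal_mul hb]
  rw [show (2:ℝ≥0∞) = ENNReal.ofReal 2 by simp]
  rw [← ENNReal.ofReal_mul (by norm_num)]
  rw [← ENNReal.ofReal_add (sq_nonneg _) (by positivity)]
  rw [← ENNReal.ofReal_add (mul_nonneg ha ha) (mul_nonneg hb hb)]
  ring_nf
section Aux2

variable {d : ℕ} (P Q : Measure (EuclideanSpace ℝ (Fin d)))
  [IsProbabilityMeasure P] [IsProbabilityMeasure Q]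
  (x : EuclideanSpace ℝ (Fin d))

lemma meas_dist_gt {s : ℝ} (hs : 0 ≤ s) :
    P {y | s < ‖y - x‖} = ENNReal.ofReal (1 - distCdf P x s) := by
  have hc : {y : EuclideanSpace ℝ (Fin d) | s < ‖y - x‖} = {y | ‖y - x‖ ≤ s}ᶜ := by
    ext y; simp [not_le]
  have hms : MeasurableSet {y : EuclideanSpace ℝ (Fin d) | ‖y - x‖ ≤ s} :=
    measurableSet_le (by fun_prop) measurable_const
  rw [hc, measure_compl hms (measure_ne_top P _), measure_univ]
  rw [ENNReal.ofReal_sub _ (distCdf_nonneg P x s), ENNReal.ofReal_one]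
  congr 1
  exact (ENNReal.ofReal_toReal (measure_ne_top P _)).symm

lemma meas_lt_qd {s t : ℝ} (hs : 0 < s) (ht : 0 < t) :
    (volume.restrict (Ioo (0:ℝ) 1)) ({u | s < qd P x u} ∩ {u | t < qd Q x u})
      = ENNReal.ofReal (1 - max (distCdf P x s) (distCdf Q x t)) := by
  rw [Measure.restrict_apply' measurableSet_Ioo]
  have hset : ({u | s < qd P x u} ∩ {u | t < qd Q x u}) ∩ Ioo (0:ℝ) 1
      = Ioo (max (distCdf P x s) (distCdf Q x t)) 1 := by
    ext u
    simp only [mem_inter_iff, mem_setOf_eq, mem_Ioo, max_lt_iff]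
    constructor
    · rintro ⟨⟨h1, h2⟩, h3, h4⟩
      have e1 : ¬ qd P x u ≤ s := not_le.mpr h1
      have e2 : ¬ qd Q x u ≤ t := not_le.mpr h2
      rw [qd_le_iff P x ⟨h3, h4⟩ hs.le] at e1
      rw [qd_le_iff Q x ⟨h3, h4⟩ ht.le] at e2
      exact ⟨⟨not_le.mp e1, not_le.mp e2⟩, h4⟩
    · rintro ⟨⟨h1, h2⟩, h4⟩
      have h3 : 0 < u := lt_of_le_of_lt (distCdf_nonneg P x s) h1
      refine ⟨⟨?_, ?_⟩, h3, h4⟩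
      · exact not_le.mp fun h => absurd ((qd_le_iff P x ⟨h3, h4⟩ hs.le).mp h)
          (not_le.mpr h1)
      · exact not_le.mp fun h => absurd ((qd_le_iff Q x ⟨h3, h4⟩ ht.le).mp h)
          (not_le.mpr h2)
  rw [hset, Real.volume_Ioo]

lemma transport_fst (J : Measure (EuclideanSpace ℝ (Fin d) × EuclideanSpace ℝ (Fin d)))
    (h : J.map Prod.fst = P) {k : EuclideanSpace ℝ (Fin d) → ℝ≥0∞} (hk : Measurable k) :
    ∫⁻ p, k p.1 ∂J = ∫⁻ y, k y ∂P := by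
  rw [← h, lintegral_map hk measurable_fst]

lemma transport_snd (J : Measure (EuclideanSpace ℝ (Fin d) × EuclideanSpace ℝ (Fin d)))
    (h : J.map Prod.snd = Q) {k : EuclideanSpace ℝ (Fin d) → ℝ≥0∞} (hk : Measurable k) :
    ∫⁻ p, k p.2 ∂J = ∫⁻ y, k y ∂Q := by
  rw [← h, lintegral_map hk measurable_snd]

lemma meas_fst_gt (J : Measure (EuclideanSpace ℝ (Fin d) × EuclideanSpace ℝ (Fin d)))
    (h : J.map Prod.fst = P) (s : ℝ) :
    J {p | s < ‖p.1 - x‖} = P {y | s < ‖y - x‖} := by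
  rw [← h, Measure.map_apply measurable_fst (measurableSet_lt measurable_const (by fun_prop))]
  rfl

lemma meas_snd_gt (J : Measure (EuclideanSpace ℝ (Fin d) × EuclideanSpace ℝ (Fin d)))
    (h : J.map Prod.snd = Q) (t : ℝ) :
    J {p | t < ‖p.2 - x‖} = Q {y | t < ‖y - x‖} := by
  rw [← h, Measure.map_apply measurable_snd (measurableSet_lt measurable_const (by fun_prop))]
  rfl

/-- The second moment of the distance distribution matches the quantile integral. -/
lemma qd_sq_lintegral :
    ∫⁻ u in Ioo (0:ℝ) 1, ENNReal.ofReal (qd P x u) * ENNReal.ofReal (qd P x u)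
      = ∫⁻ y, ENNReal.ofReal ‖y - x‖ * ENNReal.ofReal ‖y - x‖ ∂P := by
  rw [layer2 _ (qd_aemeasurable P x) (qd_aemeasurable P x)
    (Filter.Eventually.of_forall (qd_nonneg P x))
    (Filter.Eventually.of_forall (qd_nonneg P x))]
  rw [layer2 P (by fun_prop) (by fun_prop)
    (Filter.Eventually.of_forall fun y => norm_nonneg _)
    (Filter.Eventually.of_forall fun y => norm_nonneg _)]
  refine setLIntegral_congr_fun measurableSet_Ioi (fun s hs => ?_)
  refine setLIntegral_congr_fun measurableSet_Ioi (fun t ht => ?_)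
  rw [meas_lt_qd P P x hs ht]
  have hset : {y : EuclideanSpace ℝ (Fin d) | s < ‖y - x‖} ∩ {y | t < ‖y - x‖}
      = {y | max s t < ‖y - x‖} := by
    ext y; simp [max_lt_iff]
  rw [hset, meas_dist_gt P x (le_max_of_le_left hs.le)]
  rw [(distCdf_mono P x).map_max]

/-- Hoeffding-type comparison: the coupling correlation is dominated by the
quantile correlation. -/
lemma qd_mul_ge (J : Measure (EuclideanSpace ℝ (Fin d) × EuclideanSpace ℝ (Fin d)))
    [IsProbabilityMeasure J]
    (h1 : J.map Prod.fst = P) (h2 : J.map Prod.snd = Q) :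
    ∫⁻ p, ENNReal.ofReal ‖p.1 - x‖ * ENNReal.ofReal ‖p.2 - x‖ ∂J
      ≤ ∫⁻ u in Ioo (0:ℝ) 1, ENNReal.ofReal (qd P x u) * ENNReal.ofReal (qd Q x u) := by
  rw [layer2 J (by fun_prop) (by fun_prop)
    (Filter.Eventually.of_forall fun p => norm_nonneg _)
    (Filter.Eventually.of_forall fun p => norm_nonneg _)]
  rw [layer2 _ (qd_aemeasurable P x) (qd_aemeasurable Q x)
    (Filter.Eventually.of_forall (qd_nonneg P x))
    (Filter.Eventually.of_forall (qd_nonneg Q x))]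
  refine lintegral_mono_ae ((ae_restrict_iff' measurableSet_Ioi).mpr
    (Filter.Eventually.of_forall fun s hs => ?_))
  refine lintegral_mono_ae ((ae_restrict_iff' measurableSet_Ioi).mpr
    (Filter.Eventually.of_forall fun t ht => ?_))
  rw [meas_lt_qd P Q x hs ht]
  rcases le_total (distCdf P x s) (distCdf Q x t) with h | h
  · rw [max_eq_right h]
    calc J ({p | s < ‖p.1 - x‖} ∩ {p | t < ‖p.2 - x‖})
        ≤ J {p | t < ‖p.2 - x‖} := measure_mono inter_subset_right
      _ = Q {y | t < ‖y - x‖} := meas_snd_gt Q x J h2 t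
      _ = ENNReal.ofReal (1 - distCdf Q x t) := meas_dist_gt Q x ht.le
  · rw [max_eq_left h]
    calc J ({p | s < ‖p.1 - x‖} ∩ {p | t < ‖p.2 - x‖})
        ≤ J {p | s < ‖p.1 - x‖} := measure_mono inter_subset_left
      _ = P {y | s < ‖y - x‖} := meas_fst_gt P x J h1 s
      _ = ENNReal.ofReal (1 - distCdf P x s) := meas_dist_gt P x hs.le

noncomputable def dtmSq {d : ℕ} (P : Measure (EuclideanSpace ℝ (Fin d))) (m : ℝ)
    (x : EuclideanSpace ℝ (Fin d)) : ℝ :=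
  (1 / m) * ∫ u in Set.Ioo (0 : ℝ) m, quantile (sqDistCdf P x) u

noncomputable def dtm {d : ℕ} (P : Measure (EuclideanSpace ℝ (Fin d))) (m : ℝ)
    (x : EuclideanSpace ℝ (Fin d)) : ℝ :=
  Real.sqrt (dtmSq P m x)

/-- The squared Wasserstein distance of order 2, as an infimum over couplings. -/
noncomputable def W2sq {d : ℕ} (P Q : Measure (EuclideanSpace ℝ (Fin d))) : ℝ≥0∞ :=
  ⨅ (J : Measure (EuclideanSpace ℝ (Fin d) × EuclideanSpace ℝ (Fin d)))
    (_ : J.map Prod.fst = P) (_ : J.map Prod.snd = Q),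
      ∫⁻ p, ENNReal.ofReal (‖p.1 - p.2‖ ^ 2) ∂J

/-- The Wasserstein distance of order 2. -/
noncomputable def W2 {d : ℕ} (P Q : Measure (EuclideanSpace ℝ (Fin d))) : ℝ :=
  Real.sqrt (W2sq P Q).toReal

section Aux3

variable {d : ℕ} (P Q : Measure (EuclideanSpace ℝ (Fin d)))
  [IsProbabilityMeasure P] [IsProbabilityMeasure Q]
  (x : EuclideanSpace ℝ (Fin d))

lemma moment2_ne_top (hP : ∫⁻ y, ENNReal.ofReal (‖y‖ ^ 2) ∂P ≠ ⊤) :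
    ∫⁻ y, ENNReal.ofReal ‖y - x‖ * ENNReal.ofReal ‖y - x‖ ∂P ≠ ⊤ := by
  have hb : ∀ y : EuclideanSpace ℝ (Fin d),
      ENNReal.ofReal ‖y - x‖ * ENNReal.ofReal ‖y - x‖
        ≤ 2 * ENNReal.ofReal (‖y‖ ^ 2) + ENNReal.ofReal (2 * ‖x‖ ^ 2) := by
    intro y
    rw [← ENNReal.ofReal_mul (norm_nonneg _)]
    calc ENNReal.ofReal (‖y - x‖ * ‖y - x‖)
        ≤ ENNReal.ofReal (2 * ‖y‖ ^ 2 + 2 * ‖x‖ ^ 2) := by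
          refine ENNReal.ofReal_le_ofReal ?_
          nlinarith [norm_sub_le y x, norm_nonneg y, norm_nonneg x, norm_nonneg (y - x),
            sq_nonneg (‖y‖ - ‖x‖),
            mul_self_le_mul_self (norm_nonneg (y - x)) (norm_sub_le y x)]
      _ = 2 * ENNReal.ofReal (‖y‖ ^ 2) + ENNReal.ofReal (2 * ‖x‖ ^ 2) := by
          rw [ENNReal.ofReal_add (by positivity) (by positivity),
            ENNReal.ofReal_mul (by norm_num : (0:ℝ) ≤ 2)]
          simp
  refine ne_top_of_le_ne_top ?_ (lintegral_mono hb)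
  rw [lintegral_add_right _ measurable_const, lintegral_const_mul' _ _ (by norm_num),
    lintegral_const, measure_univ, mul_one]
  exact ENNReal.add_ne_top.mpr ⟨ENNReal.mul_ne_top (by norm_num) hP, ENNReal.ofReal_ne_top⟩

lemma cost_ne_top (J : Measure (EuclideanSpace ℝ (Fin d) × EuclideanSpace ℝ (Fin d)))
    (h1 : J.map Prod.fst = P) (h2 : J.map Prod.snd = Q)
    (hP : ∫⁻ y, ENNReal.ofReal (‖y‖ ^ 2) ∂P ≠ ⊤)
    (hQ : ∫⁻ y, ENNReal.ofReal (‖y‖ ^ 2) ∂Q ≠ ⊤) :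
    ∫⁻ p, ENNReal.ofReal (‖p.1 - p.2‖ ^ 2) ∂J ≠ ⊤ := by
  have hb : ∀ p : EuclideanSpace ℝ (Fin d) × EuclideanSpace ℝ (Fin d),
      ENNReal.ofReal (‖p.1 - p.2‖ ^ 2)
        ≤ 2 * ENNReal.ofReal (‖p.1‖ ^ 2) + 2 * ENNReal.ofReal (‖p.2‖ ^ 2) := by
    intro p
    calc ENNReal.ofReal (‖p.1 - p.2‖ ^ 2)
        ≤ ENNReal.ofReal (2 * ‖p.1‖ ^ 2 + 2 * ‖p.2‖ ^ 2) := by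
          refine ENNReal.ofReal_le_ofReal ?_
          nlinarith [norm_sub_le p.1 p.2, norm_nonneg p.1, norm_nonneg p.2,
            norm_nonneg (p.1 - p.2), sq_nonneg (‖p.1‖ - ‖p.2‖),
            mul_self_le_mul_self (norm_nonneg (p.1 - p.2)) (norm_sub_le p.1 p.2)]
      _ = 2 * ENNReal.ofReal (‖p.1‖ ^ 2) + 2 * ENNReal.ofReal (‖p.2‖ ^ 2) := by
          rw [ENNReal.ofReal_add (by positivity) (by positivity),
            ENNReal.ofReal_mul (by norm_num : (0:ℝ) ≤ 2),
            ENNReal.ofReal_mul (by norm_num : (0:ℝ) ≤ 2)]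
          simp
  refine ne_top_of_le_ne_top ?_ (lintegral_mono hb)
  rw [lintegral_add_left (by fun_prop), lintegral_const_mul' _ _ (by norm_num),
    lintegral_const_mul' _ _ (by norm_num)]
  rw [transport_fst P J h1 (k := fun y => ENNReal.ofReal (‖y‖ ^ 2)) (by fun_prop),
    transport_snd Q J h2 (k := fun y => ENNReal.ofReal (‖y‖ ^ 2)) (by fun_prop)]
  exact ENNReal.add_ne_top.mpr ⟨ENNReal.mul_ne_top (by norm_num) hP,
    ENNReal.mul_ne_top (by norm_num) hQ⟩

lemma W2sq_ne_top
    (hP : ∫⁻ y, ENNReal.ofReal (‖y‖ ^ 2) ∂P ≠ ⊤)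
    (hQ : ∫⁻ y, ENNReal.ofReal (‖y‖ ^ 2) ∂Q ≠ ⊤) :
    W2sq P Q ≠ ⊤ := by
  have hfst : (P.prod Q).map Prod.fst = P := by
    rw [Measure.map_fst_prod]; simp
  have hsnd : (P.prod Q).map Prod.snd = Q := by
    rw [Measure.map_snd_prod]; simp
  refine ne_top_of_le_ne_top (cost_ne_top P Q (P.prod Q) hfst hsnd hP hQ) ?_
  refine iInf_le_of_le (P.prod Q) ?_
  refine iInf_le_of_le hfst ?_
  exact iInf_le _ hsnd

lemma dtmSq_eq {m : ℝ} (hm : m ∈ Ioo (0:ℝ) 1) :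
    dtmSq P m x
      = (∫⁻ u in Ioo (0:ℝ) m,
          ENNReal.ofReal (qd P x u) * ENNReal.ofReal (qd P x u)).toReal / m := by
  have hsub : Ioo (0:ℝ) m ⊆ Ioo (0:ℝ) 1 := Ioo_subset_Ioo le_rfl hm.2.le
  have hint : ∫ u in Ioo (0:ℝ) m, quantile (sqDistCdf P x) u
      = (∫⁻ u in Ioo (0:ℝ) m,
          ENNReal.ofReal (quantile (sqDistCdf P x) u)).toReal := by
    refine integral_eq_lintegral_of_nonneg_ae ?_ ?_
    · exact (ae_restrict_iff' measurableSet_Ioo).mpr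
        (Filter.Eventually.of_forall fun u hu => quantile_nonneg P x (hsub hu))
    · exact (aemeasurable_restrict_of_monotoneOn measurableSet_Ioo
        ((quantile_monotoneOn P x).mono hsub)).aestronglyMeasurable
  have hcongr : ∫⁻ u in Ioo (0:ℝ) m, ENNReal.ofReal (quantile (sqDistCdf P x) u)
      = ∫⁻ u in Ioo (0:ℝ) m, ENNReal.ofReal (qd P x u) * ENNReal.ofReal (qd P x u) := by
    refine setLIntegral_congr_fun measurableSet_Ioo
      (fun u hu => ?_)
    simp only [qd]
    rw [← ENNReal.ofReal_mul (Real.sqrt_nonneg _),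
      Real.mul_self_sqrt (quantile_nonneg P x (hsub hu))]
  rw [dtmSq, hint, hcongr]
  ring

end Aux3

lemma mul_le_add_sq_ennreal (a b : ℝ≥0∞) : a * b ≤ a * a + b * b := by
  rcases le_total a b with h | h
  · calc a * b ≤ b * b := mul_le_mul' h le_rfl
      _ ≤ a * a + b * b := le_add_self
  · calc a * b ≤ a * a := mul_le_mul' le_rfl h
      _ ≤ a * a + b * b := le_self_add

section Main

variable {d : ℕ} (P Q : Measure (EuclideanSpace ℝ (Fin d)))
  [IsProbabilityMeasure P] [IsProbabilityMeasure Q]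
  (x : EuclideanSpace ℝ (Fin d))

lemma key_coupling
    (hP : ∫⁻ y, ENNReal.ofReal (‖y‖ ^ 2) ∂P ≠ ⊤)
    (hQ : ∫⁻ y, ENNReal.ofReal (‖y‖ ^ 2) ∂Q ≠ ⊤)
    {m : ℝ} (hm : m ∈ Ioo (0:ℝ) 1)
    (J : Measure (EuclideanSpace ℝ (Fin d) × EuclideanSpace ℝ (Fin d)))
    [IsProbabilityMeasure J]
    (h1 : J.map Prod.fst = P) (h2 : J.map Prod.snd = Q) :
    ENNReal.ofReal
      ((Real.sqrt (∫⁻ u in Ioo (0:ℝ) m,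
          ENNReal.ofReal (qd P x u) * ENNReal.ofReal (qd P x u)).toReal
        - Real.sqrt (∫⁻ u in Ioo (0:ℝ) m,
          ENNReal.ofReal (qd Q x u) * ENNReal.ofReal (qd Q x u)).toReal) ^ 2)
      ≤ ∫⁻ p, ENNReal.ofReal (‖p.1 - p.2‖ ^ 2) ∂J := by
  by_cases hL : (∫⁻ p, ENNReal.ofReal (‖p.1 - p.2‖ ^ 2) ∂J) = ⊤
  · rw [hL]; exact le_top
  have hsub : Ioo (0:ℝ) m ⊆ Ioo (0:ℝ) 1 := Ioo_subset_Ioo le_rfl hm.2.le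
  have hμle : volume.restrict (Ioo (0:ℝ) m) ≤ volume.restrict (Ioo (0:ℝ) 1) :=
    Measure.restrict_mono hsub le_rfl
  have hfP1 : AEMeasurable (qd P x) (volume.restrict (Ioo (0:ℝ) 1)) := qd_aemeasurable P x
  have hfQ1 : AEMeasurable (qd Q x) (volume.restrict (Ioo (0:ℝ) 1)) := qd_aemeasurable Q x
  have hfPm : AEMeasurable (qd P x) (volume.restrict (Ioo (0:ℝ) m)) :=
    hfP1.mono_measure hμle
  have hfQm : AEMeasurable (qd Q x) (volume.restrict (Ioo (0:ℝ) m)) :=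
    hfQ1.mono_measure hμle
  set A := ∫⁻ u in Ioo (0:ℝ) 1, ENNReal.ofReal (qd P x u) * ENNReal.ofReal (qd P x u) with hA
  set B := ∫⁻ u in Ioo (0:ℝ) 1, ENNReal.ofReal (qd Q x u) * ENNReal.ofReal (qd Q x u) with hB
  set Am := ∫⁻ u in Ioo (0:ℝ) m, ENNReal.ofReal (qd P x u) * ENNReal.ofReal (qd P x u) with hAm
  set Bm := ∫⁻ u in Ioo (0:ℝ) m, ENNReal.ofReal (qd Q x u) * ENNReal.ofReal (qd Q x u) with hBm
  set C := ∫⁻ u in Ioo (0:ℝ) 1, ENNReal.ofReal (qd P x u) * ENNReal.ofReal (qd Q x u) with hC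
  set Cm := ∫⁻ u in Ioo (0:ℝ) m, ENNReal.ofReal (qd P x u) * ENNReal.ofReal (qd Q x u) with hCm
  set X := ∫⁻ u in Ioo (0:ℝ) 1, ENNReal.ofReal ((qd P x u - qd Q x u) ^ 2) with hX
  set Xm := ∫⁻ u in Ioo (0:ℝ) m, ENNReal.ofReal ((qd P x u - qd Q x u) ^ 2) with hXm
  -- finiteness of A and B
  have hAeq : A = ∫⁻ y, ENNReal.ofReal ‖y - x‖ * ENNReal.ofReal ‖y - x‖ ∂P :=
    qd_sq_lintegral P x
  have hBeq : B = ∫⁻ y, ENNReal.ofReal ‖y - x‖ * ENNReal.ofReal ‖y - x‖ ∂Q :=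
    qd_sq_lintegral Q x
  have hAfin : A ≠ ⊤ := hAeq ▸ moment2_ne_top P x hP
  have hBfin : B ≠ ⊤ := hBeq ▸ moment2_ne_top Q x hQ
  have hAmA : Am ≤ A := lintegral_mono' hμle le_rfl
  have hBmB : Bm ≤ B := lintegral_mono' hμle le_rfl
  have hAmfin : Am ≠ ⊤ := ne_top_of_le_ne_top hAfin hAmA
  have hBmfin : Bm ≠ ⊤ := ne_top_of_le_ne_top hBfin hBmB
  have hCAB : C ≤ A + B := by
    calc C ≤ ∫⁻ u in Ioo (0:ℝ) 1,
        (ENNReal.ofReal (qd P x u) * ENNReal.ofReal (qd P x u)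
          + ENNReal.ofReal (qd Q x u) * ENNReal.ofReal (qd Q x u)) :=
          lintegral_mono fun u => mul_le_add_sq_ennreal _ _
      _ = A + B := lintegral_add_left' (hfP1.ennreal_ofReal.mul hfP1.ennreal_ofReal) _
  have hCmAB : Cm ≤ Am + Bm := by
    calc Cm ≤ ∫⁻ u in Ioo (0:ℝ) m,
        (ENNReal.ofReal (qd P x u) * ENNReal.ofReal (qd P x u)
          + ENNReal.ofReal (qd Q x u) * ENNReal.ofReal (qd Q x u)) :=
          lintegral_mono fun u => mul_le_add_sq_ennreal _ _
      _ = Am + Bm := lintegral_add_left' (hfPm.ennreal_ofReal.mul hfPm.ennreal_ofReal) _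
  have hCfin : C ≠ ⊤ := ne_top_of_le_ne_top (ENNReal.add_ne_top.mpr ⟨hAfin, hBfin⟩) hCAB
  have hCmfin : Cm ≠ ⊤ :=
    ne_top_of_le_ne_top (ENNReal.add_ne_top.mpr ⟨hAmfin, hBmfin⟩) hCmAB
  have identm : Xm + 2 * Cm = Am + Bm :=
    sq_expand _ hfPm hfQm (qd_nonneg P x) (qd_nonneg Q x)
  have ident1 : X + 2 * C = A + B :=
    sq_expand _ hfP1 hfQ1 (qd_nonneg P x) (qd_nonneg Q x)
  have hXmfin : Xm ≠ ⊤ := by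
    refine ne_top_of_le_ne_top (ENNReal.add_ne_top.mpr ⟨hAmfin, hBmfin⟩) ?_
    calc Xm ≤ Xm + 2 * Cm := le_self_add
      _ = Am + Bm := identm
  have hXfin : X ≠ ⊤ := by
    refine ne_top_of_le_ne_top (ENNReal.add_ne_top.mpr ⟨hAfin, hBfin⟩) ?_
    calc X ≤ X + 2 * C := le_self_add
      _ = A + B := ident1
  -- Hölder inequality on (0, m)
  have hsq : ∀ c : ℝ≥0∞, c ^ (2:ℝ) = c * c := fun c => by
    rw [show (2:ℝ) = ((2:ℕ):ℝ) by norm_num, ENNReal.rpow_natCast, sq]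
  have hH : Cm ≤ Am ^ (1/2 : ℝ) * Bm ^ (1/2 : ℝ) := by
    have h := ENNReal.lintegral_mul_le_Lp_mul_Lq (volume.restrict (Ioo (0:ℝ) m))
      Real.HolderConjugate.two_two
      hfPm.ennreal_ofReal hfQm.ennreal_ofReal
    simp only [Pi.mul_apply, hsq] at h
    exact h
  have hHfin : Am ^ (1/2 : ℝ) * Bm ^ (1/2 : ℝ) ≠ ⊤ :=
    ENNReal.mul_ne_top (ENNReal.rpow_ne_top_of_nonneg (by norm_num) hAmfin)
      (ENNReal.rpow_ne_top_of_nonneg (by norm_num) hBmfin)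
  have hCm' : Cm.toReal ≤ Real.sqrt Am.toReal * Real.sqrt Bm.toReal := by
    have h := ENNReal.toReal_mono hHfin hH
    rwa [ENNReal.toReal_mul, ← ENNReal.toReal_rpow, ← ENNReal.toReal_rpow,
      ← Real.sqrt_eq_rpow, ← Real.sqrt_eq_rpow] at h
  have hidm : Xm.toReal + 2 * Cm.toReal = Am.toReal + Bm.toReal := by
    have h := congrArg ENNReal.toReal identm
    rwa [ENNReal.toReal_add hXmfin (ENNReal.mul_ne_top (by norm_num) hCmfin),
      ENNReal.toReal_add hAmfin hBmfin, ENNReal.toReal_mul, ENNReal.toReal_ofNat] at h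
  have step1 : (Real.sqrt Am.toReal - Real.sqrt Bm.toReal) ^ 2 ≤ Xm.toReal := by
    nlinarith [Real.sq_sqrt (ENNReal.toReal_nonneg : (0:ℝ) ≤ Am.toReal),
      Real.sq_sqrt (ENNReal.toReal_nonneg : (0:ℝ) ≤ Bm.toReal),
      Real.sqrt_nonneg Am.toReal, Real.sqrt_nonneg Bm.toReal]
  -- coupling side
  set EXY := ∫⁻ p, ENNReal.ofReal ‖p.1 - x‖ * ENNReal.ofReal ‖p.2 - x‖ ∂J with hEXY
  set cost2 := ∫⁻ p, ENNReal.ofReal ((‖p.1 - x‖ - ‖p.2 - x‖) ^ 2) ∂J with hcost2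
  have hEXYC : EXY ≤ C := qd_mul_ge P Q x J h1 h2
  have hEXYfin : EXY ≠ ⊤ := ne_top_of_le_ne_top hCfin hEXYC
  have hEX2 : (∫⁻ p, ENNReal.ofReal ‖p.1 - x‖ * ENNReal.ofReal ‖p.1 - x‖ ∂J) = A := by
    rw [hAeq]
    exact transport_fst P J h1
      (k := fun y => ENNReal.ofReal ‖y - x‖ * ENNReal.ofReal ‖y - x‖) (by fun_prop)
  have hEY2 : (∫⁻ p, ENNReal.ofReal ‖p.2 - x‖ * ENNReal.ofReal ‖p.2 - x‖ ∂J) = B := by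
    rw [hBeq]
    exact transport_snd Q J h2
      (k := fun y => ENNReal.ofReal ‖y - x‖ * ENNReal.ofReal ‖y - x‖) (by fun_prop)
  have identJ : cost2 + 2 * EXY = A + B := by
    rw [← hEX2, ← hEY2]
    exact sq_expand J (by fun_prop) (by fun_prop)
      (fun p => norm_nonneg _) (fun p => norm_nonneg _)
  have hcost2fin : cost2 ≠ ⊤ := by
    refine ne_top_of_le_ne_top (ENNReal.add_ne_top.mpr ⟨hAfin, hBfin⟩) ?_
    calc cost2 ≤ cost2 + 2 * EXY := le_self_add
      _ = A + B := identJ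
  have hid1 : X.toReal + 2 * C.toReal = A.toReal + B.toReal := by
    have h := congrArg ENNReal.toReal ident1
    rwa [ENNReal.toReal_add hXfin (ENNReal.mul_ne_top (by norm_num) hCfin),
      ENNReal.toReal_add hAfin hBfin, ENNReal.toReal_mul, ENNReal.toReal_ofNat] at h
  have hidJ : cost2.toReal + 2 * EXY.toReal = A.toReal + B.toReal := by
    have h := congrArg ENNReal.toReal identJ
    rwa [ENNReal.toReal_add hcost2fin (ENNReal.mul_ne_top (by norm_num) hEXYfin),
      ENNReal.toReal_add hAfin hBfin, ENNReal.toReal_mul, ENNReal.toReal_ofNat] at h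
  have hEXYC' : EXY.toReal ≤ C.toReal := ENNReal.toReal_mono hCfin hEXYC
  have hXcost2 : X ≤ cost2 :=
    (ENNReal.toReal_le_toReal hXfin hcost2fin).mp (by linarith)
  have hXmX : Xm ≤ X := lintegral_mono' hμle le_rfl
  have hcost2L : cost2 ≤ ∫⁻ p, ENNReal.ofReal (‖p.1 - p.2‖ ^ 2) ∂J := by
    refine lintegral_mono fun p => ENNReal.ofReal_le_ofReal ?_
    have h := abs_norm_sub_norm_le (p.1 - x) (p.2 - x)
    rw [sub_sub_sub_cancel_right] at h
    obtain ⟨h1', h2'⟩ := abs_le.mp h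
    exact sq_le_sq' h1' h2'
  calc ENNReal.ofReal ((Real.sqrt Am.toReal - Real.sqrt Bm.toReal) ^ 2)
      ≤ Xm := ENNReal.ofReal_le_of_le_toReal step1
    _ ≤ X := hXmX
    _ ≤ cost2 := hXcost2
    _ ≤ _ := hcost2L

end Main

/-- stability of the DTM with respect to the Wasserstein distance:
`sup_x |δ_{P,m}(x) − δ_{Q,m}(x)| ≤ W₂(P,Q)/√m`. -/
theorem dtm_wasserstein_stability {d : ℕ}
    (P Q : Measure (EuclideanSpace ℝ (Fin d)))
    [IsProbabilityMeasure P] [IsProbabilityMeasure Q]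
    (hP : ∫⁻ y, ENNReal.ofReal (‖y‖ ^ 2) ∂P ≠ ⊤)
    (hQ : ∫⁻ y, ENNReal.ofReal (‖y‖ ^ 2) ∂Q ≠ ⊤)
    (m : ℝ) (hm : m ∈ Set.Ioo (0 : ℝ) 1) :
    ∀ x : EuclideanSpace ℝ (Fin d),
      |dtm P m x - dtm Q m x| ≤ W2 P Q / Real.sqrt m := by
  intro x
  have hm0 : 0 < m := hm.1
  have hWfin := W2sq_ne_top P Q hP hQ
  set aP := (∫⁻ u in Ioo (0:ℝ) m,
    ENNReal.ofReal (qd P x u) * ENNReal.ofReal (qd P x u)).toReal with haP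
  set aQ := (∫⁻ u in Ioo (0:ℝ) m,
    ENNReal.ofReal (qd Q x u) * ENNReal.ofReal (qd Q x u)).toReal with haQ
  have hkey : ENNReal.ofReal ((Real.sqrt aP - Real.sqrt aQ) ^ 2) ≤ W2sq P Q := by
    rw [W2sq]
    refine le_iInf fun J => le_iInf fun h1 => le_iInf fun h2 => ?_
    haveI : IsProbabilityMeasure J := by
      constructor
      have h : (Measure.map Prod.fst J) univ = P univ := by rw [h1]
      rw [Measure.map_apply measurable_fst MeasurableSet.univ] at h
      simpa using h
    exact key_coupling P Q x hP hQ hm J h1 h2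
  have hw : (Real.sqrt aP - Real.sqrt aQ) ^ 2 ≤ (W2sq P Q).toReal := by
    have h := ENNReal.toReal_mono hWfin hkey
    rwa [ENNReal.toReal_ofReal (sq_nonneg _)] at h
  have habs : |Real.sqrt aP - Real.sqrt aQ| ≤ W2 P Q := by
    rw [W2, ← Real.sqrt_sq_eq_abs]
    exact Real.sqrt_le_sqrt hw
  have hdtmP : dtm P m x = Real.sqrt aP / Real.sqrt m := by
    rw [dtm, dtmSq_eq P x hm, ← haP, Real.sqrt_div ENNReal.toReal_nonneg]
  have hdtmQ : dtm Q m x = Real.sqrt aQ / Real.sqrt m := by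
    rw [dtm, dtmSq_eq Q x hm, ← haQ, Real.sqrt_div ENNReal.toReal_nonneg]
  rw [hdtmP, hdtmQ, div_sub_div_same, abs_div, abs_of_nonneg (Real.sqrt_nonneg m)]
  exact div_le_div_of_nonneg_right habs (Real.sqrt_nonneg m)
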